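/- Let t > 0, ρ > 0, α > 0 be real numbers. Define s := 1 + ρ·sinh(αt)/sinh((α+1)t), let σ ≥ 0 be a real number with σ² = (s−1)² − 2ρ·cosh(t)·(s−1) + ρ², and set E := 2ρ·cosh(t) + 1 − s. Then σ·sinh(αt) = (s−1)·sinh(t), σ·sinh((α+1)t) = ρ·sinh(t), and σ·sinh((α+2)t) = E·sinh(t). -/

import Mathlib

/-- Lemma 3.3 ('panoplie'), case Δ > 0:
σ/sinh t = (s−1)/sinh(αt) = ρ/sinh((α+1)t) = E/sinh((α+2)t). -/
theorem stmt3 (t ρ α s σ E : ℝ) (ht : 0 < t) (hρ : 0 < ρ) (hα : 0 < α)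
    (hs : s = 1 + ρ * Real.sinh (α * t) / Real.sinh ((α + 1) * t))
    (hσ0 : 0 ≤ σ)
    (hσ : σ ^ 2 = (s - 1) ^ 2 - 2 * ρ * Real.cosh t * (s - 1) + ρ ^ 2)
    (hE : E = 2 * ρ * Real.cosh t + 1 - s) :
    σ * Real.sinh (α * t) = (s - 1) * Real.sinh t ∧
    σ * Real.sinh ((α + 1) * t) = ρ * Real.sinh t ∧
    σ * Real.sinh ((α + 2) * t) = E * Real.sinh t := by
  set A := Real.sinh (α * t) with hA
  set B := Real.sinh ((α + 1) * t) with hBdef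
  have hApos : 0 < A := Real.sinh_pos_iff.mpr (by positivity)
  have hBpos : 0 < B := Real.sinh_pos_iff.mpr (by positivity)
  have hshpos : 0 < Real.sinh t := Real.sinh_pos_iff.mpr ht
  have hB : B = A * Real.cosh t + Real.cosh (α * t) * Real.sinh t := by
    rw [hBdef, add_mul, one_mul, Real.sinh_add, hA]
  have hB2 : Real.sinh ((α + 2) * t) = 2 * Real.cosh t * B - A := by
    have h1 : (α + 2) * t = (α + 1) * t + t := by ring
    have h2 : α * t = (α + 1) * t - t := by ring
    rw [h1, Real.sinh_add, hA, h2, Real.sinh_sub, hBdef]; ring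
  have hC : Real.cosh (α * t) ^ 2 - A ^ 2 = 1 := by
    rw [hA]; exact Real.cosh_sq_sub_sinh_sq _
  have hch : Real.cosh t ^ 2 = 1 + Real.sinh t ^ 2 := by
    rw [Real.cosh_sq]; ring
  have h1 : (s - 1) * B = ρ * A := by
    rw [hs]; field_simp; ring
  have key : σ ^ 2 * B ^ 2 = (ρ * Real.sinh t) ^ 2 := by
    have expand : σ ^ 2 * B ^ 2 =
        ρ ^ 2 * A ^ 2 - 2 * ρ * Real.cosh t * (ρ * A) * B + ρ ^ 2 * B ^ 2 := by
      rw [hσ]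
      linear_combination ((s - 1) * B + ρ * A - 2 * ρ * Real.cosh t * B) * h1
    rw [expand, hB]
    linear_combination ρ ^ 2 * Real.sinh t ^ 2 * hC - ρ ^ 2 * A ^ 2 * hch
  have hσval : σ = ρ * Real.sinh t / B := by
    have hk : 0 < ρ * Real.sinh t / B := by positivity
    have hsq : (σ - ρ * Real.sinh t / B) * (σ + ρ * Real.sinh t / B) = 0 := by
      field_simp
      linear_combination key
    rcases mul_eq_zero.1 hsq with h | h
    · linarith
    · linarith
  refine ⟨?_, ?_, ?_⟩
  · rw [hσval]
    field_simp
    linear_combination (-1 : ℝ) * h1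
  · rw [hσval]; field_simp
  · rw [hσval, hB2, hE]
    field_simp
    linear_combination h1
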